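/- arXiv:0903.4692 — 3 statements merged into one kernel-verified Lean document; each statement's English description precedes it below -/
import Mathlib

section
/- In the setup below, the isometry τ_0 of V_+ preserves the sublattice V_0 and satisfies τ_0(w) − w ∈ V_0; consequently det(id − t·τ_0^{-1} on V_+) = (1 − t) · det(id − t·(τ_0|_{V_0})^{-1} on V_0) in ℤ[t]. -/
/-- The reflection `s_a(v) = v + ⟨v,a⟩a` in a root `a`. -/
def sRefl {V : Type*} [AddCommGroup V] [Module ℤ V]
    (B : V →ₗ[ℤ] V →ₗ[ℤ] ℤ) (a x : V) : V :=
  x + B x a • a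

/-- The Eichler–Siegel transformation
`ψ_{u,e}(x) = x + ⟨x,u⟩e − ⟨x,e⟩u − ½⟨e,e⟩⟨x,u⟩u`. -/
def esT {V : Type*} [AddCommGroup V] [Module ℤ V]
    (B : V →ₗ[ℤ] V →ₗ[ℤ] ℤ) (u e x : V) : V :=
  x + B x u • e - B x e • u - (B e e / 2 * B x u) • u

/-- The reversed characteristic polynomial `det(id − t·f)` of an endomorphism
of a lattice with basis `b`, as an element of `ℤ[t]`. -/
noncomputable def detOneSubTPoly {ι V : Type*} [Fintype ι] [DecidableEq ι]
    [AddCommGroup V] [Module ℤ V] (b : Module.Basis ι ℤ V) (f : V →ₗ[ℤ] V) :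
    Polynomial ℤ :=
  Matrix.det
    (1 - (Polynomial.X : Polynomial ℤ) •
      (LinearMap.toMatrix b b f).map (Polynomial.C : ℤ →+* Polynomial ℤ))

private lemma foldr_comp_sub_mem {V : Type*} [AddCommGroup V] [Module ℤ V]
    (S : Submodule ℤ V) (l : List (V → V))
    (hl : ∀ f ∈ l, ∀ x, f x - x ∈ S) (x : V) :
    (l.foldr (· ∘ ·) id) x - x ∈ S := by
  induction l with
  | nil => simp
  | cons f l ih =>
      have h1 := hl f List.mem_cons_self ((l.foldr (· ∘ ·) id) x)
      have h2 := ih (fun g hg => hl g (List.mem_cons_of_mem _ hg))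
      have h3 := S.add_mem h1 h2
      simpa [List.foldr_cons, sub_add_sub_cancel] using h3

/-- with `V₋` an even lattice with basis `e_1, …, e_m, e` (the `e_i`
roots), `V₀ = V₋ ⊕ ℤu` and `V₊ = V₋ ⊕ U` (`U` hyperbolic with basis `u, w`), and
`τ₀ = s_{e_1} ∘ ⋯ ∘ s_{e_m} ∘ ψ_{u,e}`: the isometry `τ₀` of `V₊` preserves the
sublattice `V₀` (the image of the inclusion `ι`), `τ₀(w) − w ∈ V₀`, and
`det(id − t·τ₀⁻¹ on V₊) = (1 − t) · det(id − t·(τ₀|_{V₀})⁻¹ on V₀)` in `ℤ[t]`. -/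
theorem stmt8 {Vp V0 : Type*} [AddCommGroup Vp] [Module ℤ Vp]
    [AddCommGroup V0] [Module ℤ V0]
    (m : ℕ)
    (bp : Module.Basis ((Fin m ⊕ Unit) ⊕ Fin 2) ℤ Vp)
    (b0 : Module.Basis ((Fin m ⊕ Unit) ⊕ Unit) ℤ V0)
    (B : Vp →ₗ[ℤ] Vp →ₗ[ℤ] ℤ)
    (hsymm : ∀ x y, B x y = B y x)
    (heven : ∀ x, Even (B x x))
    -- the `e_i` are roots
    (hroot : ∀ i : Fin m, B (bp (.inl (.inl i))) (bp (.inl (.inl i))) = -2)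
    -- `u, w` span a hyperbolic plane orthogonal to `V₋`
    (huu : B (bp (.inr 0)) (bp (.inr 0)) = 0)
    (hww : B (bp (.inr 1)) (bp (.inr 1)) = 0)
    (huw : B (bp (.inr 0)) (bp (.inr 1)) = 1)
    (horth : ∀ (j : Fin m ⊕ Unit) (k : Fin 2), B (bp (.inl j)) (bp (.inr k)) = 0)
    -- the inclusion `ι : V₀ → V₊`, basis to basis, `u ↦ u`
    (incl : V0 →ₗ[ℤ] Vp)
    (hincl1 : ∀ j : Fin m ⊕ Unit, incl (b0 (.inl j)) = bp (.inl j))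
    (hincl2 : incl (b0 (.inr ())) = bp (.inr 0))
    -- `τ₀ = s_{e_1} ∘ ⋯ ∘ s_{e_m} ∘ ψ_{u,e}` on `V₊`
    (τ0 : Vp ≃ₗ[ℤ] Vp)
    (hτ0 : ∀ x, τ0 x =
      ((List.ofFn fun i : Fin m => sRefl B (bp (.inl (.inl i)))).foldr (· ∘ ·) id)
        (esT B (bp (.inr 0)) (bp (.inl (.inr ()))) x))
    -- the restriction `τ₀|_{V₀}`
    (τ00 : V0 ≃ₗ[ℤ] V0)
    (hτ00 : ∀ x : V0, incl (τ00 x) = τ0 (incl x)) :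
    (∀ x : V0, τ0 (incl x) ∈ LinearMap.range incl) ∧
    (τ0 (bp (.inr 1)) - bp (.inr 1) ∈ LinearMap.range incl) ∧
    detOneSubTPoly bp (τ0⁻¹ : Vp ≃ₗ[ℤ] Vp).toLinearMap
      = (1 - Polynomial.X) *
        detOneSubTPoly b0 (τ00⁻¹ : V0 ≃ₗ[ℤ] V0).toLinearMap := by
  classical
  set S : Submodule ℤ Vp := LinearMap.range incl with hS
  have he : bp (.inl (.inr ())) ∈ S := ⟨b0 (.inl (.inr ())), hincl1 _⟩
  have hu : bp (.inr 0) ∈ S := ⟨b0 (.inr ()), hincl2⟩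
  have hzs : ∀ (n : ℤ) (v : Vp), v ∈ S → n • v ∈ S :=
    fun n v hv => S.toAddSubgroup.zsmul_mem hv n
  -- key membership lemma
  have hmem : ∀ x : Vp, τ0 x - x ∈ S := by
    intro x
    rw [hτ0]
    set y := esT B (bp (.inr 0)) (bp (.inl (.inr ()))) x with hy
    have hyx : y - x ∈ S := by
      have heq : y - x = (B x (bp (.inr 0))) • bp (.inl (.inr ()))
          - (B x (bp (.inl (.inr ())))) • bp (.inr 0)
          - ((B (bp (.inl (.inr ()))) (bp (.inl (.inr ()))) / 2)
              * B x (bp (.inr 0))) • bp (.inr 0) := by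
        rw [hy]; unfold esT; abel
      rw [heq]
      exact S.sub_mem (S.sub_mem (hzs _ _ he) (hzs _ _ hu)) (hzs _ _ hu)
    have hfold := foldr_comp_sub_mem S
        (List.ofFn fun i : Fin m => sRefl B (bp (.inl (.inl i))))
        (by
          intro f hf z
          rw [List.mem_ofFn] at hf
          obtain ⟨i, rfl⟩ := hf
          have heq : sRefl B (bp (.inl (.inl i))) z - z
              = (B z (bp (.inl (.inl i)))) • bp (.inl (.inl i)) := by
            unfold sRefl; abel
          rw [heq]
          exact hzs _ _ ⟨b0 (.inl (.inl i)), hincl1 _⟩) y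
    have := S.add_mem hfold hyx
    simpa [sub_add_sub_cancel] using this
  refine ⟨fun x => ⟨τ00 x, hτ00 x⟩, hmem _, ?_⟩
  -- part 3
  have happ : ∀ x, τ0 ((τ0⁻¹ : Vp ≃ₗ[ℤ] Vp) x) = x := fun x => τ0.apply_symm_apply x
  have happ0 : ∀ y, τ00 ((τ00⁻¹ : V0 ≃ₗ[ℤ] V0) y) = y := fun y => τ00.apply_symm_apply y
  obtain ⟨z0, hz0⟩ := hmem (bp (.inr 1))
  have hσincl : ∀ y : V0, (τ0⁻¹ : Vp ≃ₗ[ℤ] Vp) (incl y)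
      = incl ((τ00⁻¹ : V0 ≃ₗ[ℤ] V0) y) := by
    intro y
    apply τ0.injective
    rw [happ]
    have h := hτ00 ((τ00⁻¹ : V0 ≃ₗ[ℤ] V0) y)
    rw [happ0] at h
    exact h
  have hσw : (τ0⁻¹ : Vp ≃ₗ[ℤ] Vp) (bp (.inr 1))
      = bp (.inr 1) - incl ((τ00⁻¹ : V0 ≃ₗ[ℤ] V0) z0) := by
    apply τ0.injective
    rw [happ, map_sub, ← hσincl, happ]
    have h : τ0 (bp (.inr 1)) = bp (.inr 1) + incl z0 := by
      rw [hz0]; abel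
    rw [h]; abel
  -- the index embedding g
  set g : ((Fin m ⊕ Unit) ⊕ Unit) → ((Fin m ⊕ Unit) ⊕ Fin 2) :=
    Sum.elim Sum.inl (fun _ => Sum.inr 0) with hg
  have ginj : Function.Injective g := by
    intro a b h
    rcases a with j1 | ⟨⟩ <;> rcases b with j2 | ⟨⟩
    · simp only [hg, Sum.elim_inl, Sum.inl.injEq] at h; simp [h]
    · simp [hg] at h
    · simp [hg] at h
    · rfl
  have hinclg : ∀ k, incl (b0 k) = bp (g k) := by
    rintro (j | ⟨⟩)
    · exact hincl1 j
    · exact hincl2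
  -- coordinates of incl x
  have hrepr : ∀ x : V0, bp.repr (incl x) = Finsupp.mapDomain g (b0.repr x) := by
    have key : ((bp.repr : Vp ≃ₗ[ℤ] _).toLinearMap.comp incl)
        = (Finsupp.lmapDomain ℤ ℤ g).comp (b0.repr : V0 ≃ₗ[ℤ] _).toLinearMap := by
      apply b0.ext
      intro k
      simp [hinclg k, Finsupp.lmapDomain_apply, Finsupp.mapDomain_single]
    intro x
    exact LinearMap.congr_fun key x
  have h1 : ∀ (x : V0) k, bp.repr (incl x) (g k) = b0.repr x k := by
    intro x k; rw [hrepr, Finsupp.mapDomain_apply ginj]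
  have h2 : ∀ x : V0, bp.repr (incl x) (.inr 1) = 0 := by
    intro x
    rw [hrepr]
    apply Finsupp.mapDomain_notin_range
    rintro ⟨(j | ⟨⟩), hk⟩ <;> simp [hg] at hk <;> exact absurd hk (by decide)
  -- the reindexing equivalence
  set φ : (((Fin m ⊕ Unit) ⊕ Unit) ⊕ Unit) ≃ ((Fin m ⊕ Unit) ⊕ Fin 2) :=
    { toFun := Sum.elim g (fun _ => Sum.inr 1)
      invFun := Sum.elim (fun j => Sum.inl (Sum.inl j))
        (fun i => if i = 0 then Sum.inl (Sum.inr ()) else Sum.inr ())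
      left_inv := by
        rintro ((j | ⟨⟩) | ⟨⟩) <;> simp [hg]
      right_inv := by
        rintro (j | i)
        · simp [hg]
        · fin_cases i <;> simp [hg] } with hφ
  have hφl : ∀ k, φ (Sum.inl k) = g k := fun _ => rfl
  have hφr : ∀ j : Unit, φ (Sum.inr j) = Sum.inr 1 := fun _ => rfl
  unfold detOneSubTPoly
  set M := LinearMap.toMatrix bp bp (τ0⁻¹ : Vp ≃ₗ[ℤ] Vp).toLinearMap with hM
  set A := LinearMap.toMatrix b0 b0 (τ00⁻¹ : V0 ≃ₗ[ℤ] V0).toLinearMap with hA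
  set c : Matrix ((Fin m ⊕ Unit) ⊕ Unit) Unit ℤ :=
    fun k _ => - b0.repr ((τ00⁻¹ : V0 ≃ₗ[ℤ] V0) z0) k with hc
  have hgne : ∀ k', (Sum.inr 1 : (Fin m ⊕ Unit) ⊕ Fin 2) ≠ g k' := by
    rintro (j' | ⟨⟩) h <;> simp [hg] at h <;> exact absurd h (by decide)
  have hblock : M.submatrix φ φ = Matrix.fromBlocks A c 0 1 := by
    apply Matrix.ext
    intro i j
    rcases j with k | j
    · -- column in V0
      have hcol : M.submatrix φ φ i (.inl k)
          = bp.repr (incl ((τ00⁻¹ : V0 ≃ₗ[ℤ] V0) (b0 k))) (φ i) := by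
        rw [Matrix.submatrix_apply, hM, LinearMap.toMatrix_apply, hφl,
          ← hinclg, LinearEquiv.coe_coe, hσincl]
      rcases i with k' | i
      · rw [hcol, hφl, h1]
        simp [Matrix.fromBlocks_apply₁₁, hA, LinearMap.toMatrix_apply]
      · rw [hcol, hφr, h2]
        simp [Matrix.fromBlocks_apply₂₁]
    · -- column w
      have hcol : M.submatrix φ φ i (.inr j)
          = bp.repr (bp (.inr 1)) (φ i)
            - bp.repr (incl ((τ00⁻¹ : V0 ≃ₗ[ℤ] V0) z0)) (φ i) := by
        rw [Matrix.submatrix_apply, hM, LinearMap.toMatrix_apply, hφr,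
          LinearEquiv.coe_coe, hσw, map_sub]
        simp
      rcases i with k' | i
      · rw [hcol, hφl, h1, Module.Basis.repr_self,
          Finsupp.single_apply, if_neg (hgne k')]
        simp [Matrix.fromBlocks_apply₁₂, hc]
        rfl
      · rw [hcol, hφr, h2, Module.Basis.repr_self]
        simp [Matrix.fromBlocks_apply₂₂, Matrix.one_apply]
  -- final determinant computation
  rw [← Matrix.det_submatrix_equiv_self φ]
  have step1 : ((1 : Matrix _ _ (Polynomial ℤ))
        - (Polynomial.X : Polynomial ℤ) • M.map (Polynomial.C : ℤ →+* Polynomial ℤ)).submatrix φ φ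
      = (1 : Matrix _ _ (Polynomial ℤ))
        - (Polynomial.X : Polynomial ℤ) • (M.submatrix φ φ).map (Polynomial.C : ℤ →+* Polynomial ℤ) := by
    apply Matrix.ext
    intro i j
    simp only [Matrix.submatrix_apply, Matrix.sub_apply, Matrix.smul_apply,
      Matrix.map_apply, Matrix.one_apply, smul_eq_mul]
    simp [Equiv.apply_eq_iff_eq]
  have step2 : (1 : Matrix _ _ (Polynomial ℤ))
        - (Polynomial.X : Polynomial ℤ) • ((Matrix.fromBlocks A c 0 1).map (Polynomial.C : ℤ →+* Polynomial ℤ))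
      = Matrix.fromBlocks
          (1 - (Polynomial.X : Polynomial ℤ) • A.map (Polynomial.C : ℤ →+* Polynomial ℤ))
          (-((Polynomial.X : Polynomial ℤ) • c.map (Polynomial.C : ℤ →+* Polynomial ℤ)))
          0
          (1 - (Polynomial.X : Polynomial ℤ) • (1 : Matrix Unit Unit ℤ).map (Polynomial.C : ℤ →+* Polynomial ℤ)) := by
    apply Matrix.ext
    rintro (i | i) (j | j) <;>
      simp [Matrix.one_apply, Matrix.sub_apply, Matrix.smul_apply, Matrix.map_apply,
        Matrix.fromBlocks_apply₁₁, Matrix.fromBlocks_apply₁₂,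
        Matrix.fromBlocks_apply₂₁, Matrix.fromBlocks_apply₂₂]
  rw [step1, hblock, step2, Matrix.det_fromBlocks_zero₂₁]
  have hD : ((1 : Matrix Unit Unit (Polynomial ℤ))
      - (Polynomial.X : Polynomial ℤ) • (1 : Matrix Unit Unit ℤ).map (Polynomial.C : ℤ →+* Polynomial ℤ)).det
      = 1 - Polynomial.X := by
    rw [Matrix.det_unique]
    simp [Matrix.one_apply, Matrix.sub_apply, Matrix.map_apply]
  rw [hD]
  ring
end

section
/- In the setup below, for every integer k ≥ 1 one has ⟨u − w, τ_0^k(u − w) − τ_0^{k−1}(u − w)⟩ = ½⟨e,e⟩ − ⟨u − w, τ_0^k(e)⟩. -/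
section Aux
variable {V : Type*} [AddCommGroup V] [Module ℤ V] (B : V →ₗ[ℤ] V →ₗ[ℤ] ℤ)

def compRefl (l : List V) : V → V := (l.map (sRefl B)).foldr (· ∘ ·) id

@[simp] lemma compRefl_nil (x : V) : compRefl B [] x = x := rfl

@[simp] lemma compRefl_cons (a : V) (l : List V) (x : V) :
    compRefl B (a :: l) x = sRefl B a (compRefl B l x) := rfl

lemma compRefl_fix (l : List V) (u : V) (h : ∀ a ∈ l, B u a = 0) :
    compRefl B l u = u := by
  induction l with
  | nil => rfl
  | cons a l ih =>
    rw [compRefl_cons, ih (fun b hb => h b (List.mem_cons_of_mem a hb))]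
    simp [sRefl, h a List.mem_cons_self]

lemma compRefl_add (l : List V) (x y : V) :
    compRefl B l (x + y) = compRefl B l x + compRefl B l y := by
  induction l with
  | nil => rfl
  | cons a l ih =>
    simp only [compRefl_cons, ih, sRefl, map_add, LinearMap.add_apply, add_zsmul]
    abel

lemma compRefl_smul (l : List V) (c : ℤ) (x : V) :
    compRefl B l (c • x) = c • compRefl B l x := by
  induction l with
  | nil => rfl
  | cons a l ih =>
    rw [compRefl_cons, compRefl_cons, ih]
    show sRefl B a (c • compRefl B l x) = c • sRefl B a (compRefl B l x)
    rw [sRefl, sRefl, show B (c • compRefl B l x) a = c * B (compRefl B l x) a by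
      rw [← LinearMap.flip_apply B, map_zsmul, zsmul_eq_mul, LinearMap.flip_apply]
      push_cast
      ring]
    rw [zsmul_add]
    congr 1
    rw [mul_zsmul]

lemma compRefl_sub (l : List V) (x y : V) :
    compRefl B l (x - y) = compRefl B l x - compRefl B l y := by
  have h := compRefl_add B l (x - y) y
  rw [sub_add_cancel] at h
  rw [h]; abel

end Aux

/-- with `V₋` an even lattice with basis `e_1, …, e_m, e` (the `e_i`
roots), `V₊ = V₋ ⊕ U` (`U` hyperbolic with basis `u, w`) and
`τ₀ = s_{e_1} ∘ ⋯ ∘ s_{e_m} ∘ ψ_{u,e}`, for every `k ≥ 1`: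
`⟨u − w, τ₀^k(u − w) − τ₀^{k−1}(u − w)⟩ = ½⟨e,e⟩ − ⟨u − w, τ₀^k(e)⟩`. -/
theorem stmt9 {Vp : Type*} [AddCommGroup Vp] [Module ℤ Vp]
    (m : ℕ)
    (bp : Module.Basis ((Fin m ⊕ Unit) ⊕ Fin 2) ℤ Vp)
    (B : Vp →ₗ[ℤ] Vp →ₗ[ℤ] ℤ)
    (hsymm : ∀ x y, B x y = B y x)
    (heven : ∀ x, Even (B x x))
    (hroot : ∀ i : Fin m, B (bp (.inl (.inl i))) (bp (.inl (.inl i))) = -2)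
    (huu : B (bp (.inr 0)) (bp (.inr 0)) = 0)
    (hww : B (bp (.inr 1)) (bp (.inr 1)) = 0)
    (huw : B (bp (.inr 0)) (bp (.inr 1)) = 1)
    (horth : ∀ (j : Fin m ⊕ Unit) (k : Fin 2), B (bp (.inl j)) (bp (.inr k)) = 0)
    (τ0 : Vp ≃ₗ[ℤ] Vp)
    (hτ0 : ∀ x, τ0 x =
      ((List.ofFn fun i : Fin m => sRefl B (bp (.inl (.inl i)))).foldr (· ∘ ·) id)
        (esT B (bp (.inr 0)) (bp (.inl (.inr ()))) x)) :
    ∀ k : ℕ, 1 ≤ k →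
      B (bp (.inr 0) - bp (.inr 1))
        ((τ0 ^ k) (bp (.inr 0) - bp (.inr 1)) -
          (τ0 ^ (k - 1)) (bp (.inr 0) - bp (.inr 1)))
        = B (bp (.inl (.inr ()))) (bp (.inl (.inr ()))) / 2 -
            B (bp (.inr 0) - bp (.inr 1)) ((τ0 ^ k) (bp (.inl (.inr ())))) := by
  set u := bp (.inr 0) with hu
  set w := bp (.inr 1) with hw
  set e := bp (.inl (.inr ())) with he
  set L : List Vp := List.ofFn (fun i : Fin m => bp (.inl (.inl i))) with hL
  have hτ : ∀ x, τ0 x = compRefl B L (esT B u e x) := by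
    intro x
    rw [hτ0 x]
    simp only [compRefl, hL, List.map_ofFn, Function.comp_def]
  have hmul : ∀ (f g : Vp ≃ₗ[ℤ] Vp) (x : Vp), (f * g) x = f (g x) := fun _ _ _ => rfl
  have hLorth : ∀ v : Fin 2, ∀ a ∈ L, B (bp (.inr v)) a = 0 := by
    intro v a ha
    simp only [hL, List.mem_ofFn] at ha
    obtain ⟨i, rfl⟩ := ha
    rw [hsymm]; exact horth _ _
  have hue : B u e = 0 := by rw [hsymm]; exact horth _ _
  have heu : B e u = 0 := by rw [hsymm]; exact hue
  have hwe : B w e = 0 := by rw [hsymm]; exact horth _ _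
  set Q := B e e with hQ
  have hQ2 : Q / 2 + Q / 2 = Q := by
    obtain ⟨r, hr⟩ := heven e
    omega
  -- τ0 fixes u
  have hτu : τ0 u = u := by
    rw [hτ]
    have h1 : esT B u e u = u := by simp [esT, huu, hue]
    rw [h1, compRefl_fix B L u (hLorth 0)]
  have hpowu : ∀ n : ℕ, (τ0 ^ n) u = u := by
    intro n
    induction n with
    | zero => simp
    | succ n ih => rw [pow_succ, hmul, hτu, ih]
  -- τ0 e
  have hτe : τ0 e = compRefl B L e - Q • u := by
    rw [hτ]
    have h1 : esT B u e e = e - Q • u := by simp [esT, heu, ← hQ]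
    rw [h1, compRefl_sub, compRefl_smul, compRefl_fix B L u (hLorth 0)]
  -- pairing facts
  have h1 : B (u - w) u = -1 := by
    rw [map_sub, LinearMap.sub_apply, huu, hsymm w u, huw]; ring
  have h2 : B (u - w) e = 0 := by
    rw [map_sub, LinearMap.sub_apply, hue, hwe]; ring
  -- τ0 (u - w)
  have hτuw : τ0 (u - w) = (u - w) - (Q / 2) • u - τ0 e := by
    rw [hτ]
    have h3 : esT B u e (u - w) = (u - w) - e + (Q / 2) • u := by
      show (u - w) + B (u - w) u • e - B (u - w) e • u
          - (B e e / 2 * B (u - w) u) • u = _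
      rw [h1, h2, ← hQ]
      simp only [neg_zsmul, one_zsmul, zero_zsmul, mul_neg_one]
      abel
    rw [h3, compRefl_add, compRefl_sub, compRefl_sub, compRefl_smul,
      compRefl_fix B L u (hLorth 0), compRefl_fix B L w (hLorth 1), hτe]
    have h4 : Q • u = (Q / 2) • u + (Q / 2) • u := by
      rw [← add_zsmul, hQ2]
    rw [h4]
    abel
  -- key recursion
  have hkey : ∀ n : ℕ, (τ0 ^ (n + 1)) (u - w)
      = (τ0 ^ n) (u - w) - (Q / 2) • u - (τ0 ^ (n + 1)) e := by
    intro n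
    rw [pow_succ, hmul, hmul, hτuw, map_sub, map_sub, map_zsmul, hpowu n]
  intro k hk
  obtain ⟨n, rfl⟩ : ∃ n, k = n + 1 := ⟨k - 1, by omega⟩
  simp only [Nat.add_sub_cancel]
  rw [hkey n]
  rw [show (τ0 ^ n) (u - w) - (Q / 2) • u - (τ0 ^ (n + 1)) e - (τ0 ^ n) (u - w)
      = -((Q / 2) • u) - (τ0 ^ (n + 1)) e by abel]
  rw [map_sub, map_neg, map_zsmul, h1]
  simp only [zsmul_eq_mul]
  push_cast
  ring
end

section
/- In the setup below, for every integer k ≥ 0 one has ⟨τ_0^k(e), u − w⟩ = Σ_{ℓ=0}^{k−1} ⟨e, τ_0^ℓ(e)⟩ (the empty sum for k = 0 being 0). -/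
/-- with `V₋` an even lattice with basis `e_1, …, e_m, e` (the `e_i`
roots), `V₊ = V₋ ⊕ U` (`U` hyperbolic with basis `u, w`) and
`τ₀ = s_{e_1} ∘ ⋯ ∘ s_{e_m} ∘ ψ_{u,e}`, for every `k ≥ 0`:
`⟨τ₀^k(e), u − w⟩ = Σ_{ℓ=0}^{k−1} ⟨e, τ₀^ℓ(e)⟩`. -/
theorem stmt10 {Vp : Type*} [AddCommGroup Vp] [Module ℤ Vp]
    (m : ℕ)
    (bp : Module.Basis ((Fin m ⊕ Unit) ⊕ Fin 2) ℤ Vp)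
    (B : Vp →ₗ[ℤ] Vp →ₗ[ℤ] ℤ)
    (hsymm : ∀ x y, B x y = B y x)
    (heven : ∀ x, Even (B x x))
    (hroot : ∀ i : Fin m, B (bp (.inl (.inl i))) (bp (.inl (.inl i))) = -2)
    (huu : B (bp (.inr 0)) (bp (.inr 0)) = 0)
    (hww : B (bp (.inr 1)) (bp (.inr 1)) = 0)
    (huw : B (bp (.inr 0)) (bp (.inr 1)) = 1)
    (horth : ∀ (j : Fin m ⊕ Unit) (k : Fin 2), B (bp (.inl j)) (bp (.inr k)) = 0)
    (τ0 : Vp ≃ₗ[ℤ] Vp)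
    (hτ0 : ∀ x, τ0 x =
      ((List.ofFn fun i : Fin m => sRefl B (bp (.inl (.inl i)))).foldr (· ∘ ·) id)
        (esT B (bp (.inr 0)) (bp (.inl (.inr ()))) x)) :
    ∀ k : ℕ,
      B ((τ0 ^ k) (bp (.inl (.inr ())))) (bp (.inr 0) - bp (.inr 1))
        = ∑ ℓ ∈ Finset.range k,
            B (bp (.inl (.inr ()))) ((τ0 ^ ℓ) (bp (.inl (.inr ())))) := by

  set u := bp (.inr 0) with hu_def
  set w := bp (.inr 1) with hw_def
  set e := bp (.inl (.inr ())) with he_def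
  have heu : B e u = 0 := horth (.inr ()) 0
  have hew : B e w = 0 := horth (.inr ()) 1
  have hfold : ∀ z : Vp, (∀ i : Fin m, B (bp (.inl (.inl i))) z = 0) →
      ∀ y : Vp,
        B (((List.ofFn fun i : Fin m => sRefl B (bp (.inl (.inl i)))).foldr (· ∘ ·) id) y) z
          = B y z := by
    intro z hz
    have key : ∀ l : List (Vp → Vp), (∀ f ∈ l, ∀ y, B (f y) z = B y z) →
        ∀ y, B ((l.foldr (· ∘ ·) id) y) z = B y z := by
      intro l
      induction l with
      | nil => intro _ y; simp
      | cons f t ih =>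
        intro h y
        simp only [List.foldr_cons, Function.comp_apply]
        rw [h f (List.mem_cons_self ..), ih (fun g hg => h g (List.mem_cons_of_mem _ hg))]
    refine key _ ?_
    intro f hf y
    rw [List.mem_ofFn] at hf
    obtain ⟨i, rfl⟩ := hf
    simp [sRefl, hz i]
  have hτu : ∀ x, B (τ0 x) u = B x u := by
    intro x
    rw [hτ0, hfold u (fun i => horth (.inl i) 0)]
    simp [esT, heu, huu]
  have hτuw : ∀ x, B (τ0 x) (u - w) = B x (u - w) + B x e + (B e e / 2) * B x u := by
    intro x
    rw [hτ0, hfold (u - w) (fun i => by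
      simp [map_sub, hu_def, hw_def, horth (.inl i) 0, horth (.inl i) 1])]
    simp [esT, heu, hew, huu, huw]
  have hstep : ∀ n : ℕ, (τ0 ^ (n + 1)) e = τ0 ((τ0 ^ n) e) := by
    intro n
    rw [pow_succ']
    rfl
  have hku : ∀ n : ℕ, B ((τ0 ^ n) e) u = 0 := by
    intro n
    induction n with
    | zero => simpa using heu
    | succ n ih => rw [hstep, hτu, ih]
  intro k
  induction k with
  | zero => simp [map_sub, heu, hew]
  | succ n ih =>
    rw [Finset.sum_range_succ, ← ih, hstep, hτuw, hku n, hsymm e ((τ0 ^ n) e)]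
    ring
end
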